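/- The MLN partition function satisfies M_min · C_{n,m} · Z(n) · Z(m) ≤ Z(n+m) ≤ M_max · C_{n,m} · Z(n) · Z(m), where C_{n,m} is the number of ways to extend a pair consisting of an interpretation on [n] and an interpretation on [n+1..n+m] to a full interpretation on [n+m]. -/

import Mathlib

open scoped BigOperators

structure Vocab where
  Rel : Type
  [fintypeRel : Fintype Rel]
  [decEqRel : DecidableEq Rel]
  ar : Rel → ℕ

attribute [instance] Vocab.fintypeRel Vocab.decEqRel

def Interp (V : Vocab) (D : Type) : Type :=
  (r : V.Rel) → (Fin (V.ar r) → D) → Bool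

noncomputable instance (V : Vocab) (D : Type) [Fintype D] [DecidableEq D] :
    Fintype (Interp V D) := by
  unfold Interp; infer_instance

noncomputable instance (V : Vocab) (D : Type) : DecidableEq (Interp V D) :=
  Classical.decEq _

def restrict {V : Vocab} {D E : Type} (f : E → D) (ω : Interp V D) : Interp V E :=
  fun r t => ω r (f ∘ t)

structure Formula (V : Vocab) where
  arity : ℕ
  sat : Interp V (Fin arity) → Bool

structure MLN (V : Vocab) where
  formulas : List (Formula V × ℝ)

noncomputable def nGround {V : Vocab} {D : Type} [Fintype D] [DecidableEq D]
    (φ : Formula V) (ω : Interp V D) : ℕ :=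
  Fintype.card {c : Fin φ.arity ↪ D // φ.sat (restrict (fun i => c i) ω) = true}

noncomputable def weight {V : Vocab} {D : Type} [Fintype D] [DecidableEq D]
    (Φ : MLN V) (ω : Interp V D) : ℝ :=
  Real.exp ((Φ.formulas.map (fun p => p.2 * (nGround p.1 ω : ℝ))).sum)

noncomputable def kweight {V : Vocab} (Φ : MLN V) (k : ℕ) (ν : Interp V (Fin k)) : ℝ :=
  Real.exp (((Φ.formulas.filter (fun p => p.1.arity == k)).map
      (fun p => p.2 * (nGround p.1 ν : ℝ))).sum)

noncomputable def downset {V : Vocab} {n k : ℕ} (ω : Interp V (Fin n))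
    (s : Finset (Fin n)) (h : s.card = k) : Interp V (Fin k) :=
  restrict (fun i => ((s.orderIsoOfFin h i : Fin n))) ω

noncomputable def Zpart {V : Vocab} (Φ : MLN V) (N : ℕ) : ℝ :=
  ∑ ω : Interp V (Fin N), weight Φ ω

noncomputable def wmax {V : Vocab} (Φ : MLN V) (k : ℕ) : ℝ :=
  ⨆ ν : Interp V (Fin k), kweight Φ k ν

noncomputable def wmin {V : Vocab} (Φ : MLN V) (k : ℕ) : ℝ :=
  ⨅ ν : Interp V (Fin k), kweight Φ k ν

def exponent (n m k : ℕ) : ℕ := (n + m).choose k - n.choose k - m.choose k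

noncomputable def Mmax {V : Vocab} (Φ : MLN V) (d n m : ℕ) : ℝ :=
  ∏ k ∈ Finset.Icc 1 d, (wmax Φ k) ^ (exponent n m k)

noncomputable def Mmin {V : Vocab} (Φ : MLN V) (d n m : ℕ) : ℝ :=
  ∏ k ∈ Finset.Icc 1 d, (wmin Φ k) ^ (exponent n m k)

noncomputable def Pdist {V : Vocab} (Φ : MLN V) (N : ℕ) (ω : Interp V (Fin N)) : ℝ :=
  weight Φ ω / Zpart Φ N

noncomputable def marg {V : Vocab} (Φ : MLN V) (n m : ℕ) (ω : Interp V (Fin n)) : ℝ :=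
  ∑ ω' ∈ Finset.univ.filter
      (fun ω' : Interp V (Fin (n + m)) => restrict (Fin.castAdd m) ω' = ω),
    Pdist Φ (n + m) ω'


section AuxProof
open Finset

variable {V : Vocab}

lemma restrict_restrict {D E F : Type} (f : E → D) (g : F → E) (ω : Interp V D) :
    restrict g (restrict f ω) = restrict (f ∘ g) ω := rfl

lemma restrict_congr {D E : Type} {f g : E → D} (h : ∀ i, f i = g i) (ω : Interp V D) :
    restrict f ω = restrict g ω := by
  have : f = g := funext h
  rw [this]

lemma kweight_pos (Φ : MLN V) (k : ℕ) (ν : Interp V (Fin k)) : 0 < kweight Φ k ν :=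
  Real.exp_pos _

lemma weight_pos (Φ : MLN V) {D : Type} [Fintype D] [DecidableEq D] (ω : Interp V D) :
    0 < weight Φ ω := Real.exp_pos _

instance instNEI (k : ℕ) : Nonempty (Interp V (Fin k)) := ⟨fun _ _ => false⟩

lemma kweight_le_wmax (Φ : MLN V) (k : ℕ) (ν : Interp V (Fin k)) :
    kweight Φ k ν ≤ wmax Φ k :=
  le_ciSup (Set.Finite.bddAbove (Set.finite_range _)) ν

lemma wmin_le_kweight (Φ : MLN V) (k : ℕ) (ν : Interp V (Fin k)) :
    wmin Φ k ≤ kweight Φ k ν :=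
  ciInf_le (Set.Finite.bddBelow (Set.finite_range _)) ν

lemma wmin_pos (Φ : MLN V) (k : ℕ) : 0 < wmin Φ k := by
  obtain ⟨ν₀, h⟩ := Finite.exists_min (kweight Φ k)
  exact lt_of_lt_of_le (kweight_pos Φ k ν₀) (le_ciInf h)

lemma wmax_pos (Φ : MLN V) (k : ℕ) : 0 < wmax Φ k :=
  lt_of_lt_of_le (kweight_pos Φ k (Classical.arbitrary _)) (kweight_le_wmax Φ k _)


open Finset

variable {V : Vocab}

lemma map_orderEmbOfFin {N : ℕ} (s : Finset (Fin N)) {k : ℕ} (h : s.card = k) :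
    Finset.univ.map (s.orderEmbOfFin h).toEmbedding = s := by
  ext x
  simp only [Finset.mem_map, Finset.mem_univ, true_and]
  constructor
  · rintro ⟨i, rfl⟩; exact s.orderEmbOfFin_mem h i
  · intro hx
    have : x ∈ Set.range (s.orderEmbOfFin h) := by
      rw [Finset.range_orderEmbOfFin]; exact hx
    obtain ⟨i, hi⟩ := this
    exact ⟨i, hi⟩

lemma card_fiber (φ : Formula V) {N : ℕ} (ω : Interp V (Fin N))
    (s : Finset (Fin N)) (hs : s.card = φ.arity) :
    (Finset.univ.filter (fun c : Fin φ.arity ↪ Fin N =>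
        φ.sat (restrict (fun i => c i) ω) = true ∧ Finset.univ.map c = s)).card
      = nGround φ (downset ω s rfl) := by
  classical
  rw [nGround, Fintype.card_subtype]
  have hmem : ∀ (c : Fin φ.arity ↪ Fin N), Finset.univ.map c = s → ∀ i, c i ∈ s := by
    intro c h i; rw [← h]; exact Finset.mem_map_of_mem _ (Finset.mem_univ i)
  refine Finset.card_bij'
    (fun c hc => ⟨fun i => (s.orderIsoOfFin rfl).symm
        ⟨c i, hmem c (Finset.mem_filter.1 hc).2.2 i⟩,
      fun i j hij => c.injective (by
        have := congrArg (s.orderIsoOfFin rfl) hij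
        simp only [OrderIso.apply_symm_apply] at this
        exact congrArg Subtype.val this)⟩)
    (fun c' _ => ⟨fun i => s.orderEmbOfFin rfl (c' i),
      (s.orderEmbOfFin rfl).injective.comp c'.injective⟩)
    ?_ ?_ ?_ ?_
  · intro c hc
    simp only [Finset.mem_filter, Finset.mem_univ, true_and] at hc ⊢
    have step : restrict (fun i => ((s.orderIsoOfFin rfl).symm
          ⟨c i, hmem c hc.2 i⟩ : Fin s.card)) (downset ω s rfl)
        = restrict (fun i => ((s.orderIsoOfFin rfl ((s.orderIsoOfFin rfl).symm
          ⟨c i, hmem c hc.2 i⟩) : Fin N))) ω := rfl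
    have : restrict (fun i => ((s.orderIsoOfFin rfl).symm
          ⟨c i, hmem c hc.2 i⟩ : Fin s.card)) (downset ω s rfl)
        = restrict (fun i => c i) ω := by
      rw [step]
      refine restrict_congr (fun i => ?_) ω
      simp
    exact (congrArg (fun x => φ.sat x = true) this).mpr hc.1
  · intro c' hc'
    simp only [Finset.mem_filter, Finset.mem_univ, true_and] at hc' ⊢
    constructor
    · have : restrict (fun i => (s.orderEmbOfFin rfl (c' i) : Fin N)) ω
          = restrict (fun i => c' i) (downset ω s rfl) := rfl
      rw [Function.Embedding.coeFn_mk, this]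
      exact hc'
    · have h1 : (⟨fun i => s.orderEmbOfFin rfl (c' i), _⟩ : Fin φ.arity ↪ Fin N)
          = c'.trans (s.orderEmbOfFin rfl).toEmbedding := rfl
      rw [h1, ← Finset.map_map]
      have h2 : Finset.univ.map c' = Finset.univ := by
        apply Finset.eq_univ_of_card
        rw [Finset.card_map, Finset.card_univ, Fintype.card_fin, Fintype.card_fin, hs]
      rw [h2, map_orderEmbOfFin]
  · intro c hc
    ext i
    exact congrArg (fun x : {x // x ∈ s} => ((x : Fin N) : ℕ))
      ((s.orderIsoOfFin rfl).apply_symm_apply _)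
  · intro c' hc'
    ext i
    simp only [Function.Embedding.coeFn_mk]
    have : (⟨s.orderEmbOfFin rfl (c' i), by simp⟩ : {x // x ∈ s})
        = s.orderIsoOfFin rfl (c' i) := Subtype.ext (by simp)
    rw [this, OrderIso.symm_apply_apply]
lemma nGround_eq (φ : Formula V) {N : ℕ} (ω : Interp V (Fin N)) :
    nGround φ ω = ∑ s ∈ Finset.univ.filter (fun s : Finset (Fin N) => s.card = φ.arity),
      nGround φ (downset ω s rfl) := by
  classical
  rw [nGround, Fintype.card_subtype]
  rw [Finset.card_eq_sum_card_fiberwise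
    (f := fun c : Fin φ.arity ↪ Fin N => Finset.univ.map c)
    (t := Finset.univ.filter (fun s : Finset (Fin N) => s.card = φ.arity))
    (fun c _ => by simp)]
  refine Finset.sum_congr rfl (fun s hs => ?_)
  rw [← card_fiber φ ω s (Finset.mem_filter.1 hs).2]
  congr 1
  rw [Finset.filter_filter]

lemma list_sum_swap {α β : Type*} (l : List α) (S : Finset β) (F : α → β → ℝ) :
    (l.map fun p => ∑ s ∈ S, F p s).sum = ∑ s ∈ S, (l.map fun p => F p s).sum := by
  induction l with
  | nil => simp
  | cons a l ih => simp [ih, Finset.sum_add_distrib]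

lemma list_sum_filter {α : Type*} (l : List α) (q : α → Bool) (f : α → ℝ) :
    ((l.filter q).map f).sum = (l.map fun p => if q p then f p else 0).sum := by
  induction l with
  | nil => simp
  | cons a l ih =>
    by_cases h : q a <;> simp [List.filter_cons, h, ih]

lemma weight_eq_prod (Φ : MLN V) {N : ℕ} (ω : Interp V (Fin N)) :
    weight Φ ω = ∏ s : Finset (Fin N), kweight Φ s.card (downset ω s rfl) := by
  classical
  unfold weight kweight
  rw [← Real.exp_sum]
  congr 1
  have hterm : ∀ p : Formula V × ℝ,
      p.2 * (nGround p.1 ω : ℝ)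
        = ∑ s : Finset (Fin N), (if p.1.arity == s.card
            then p.2 * (nGround p.1 (downset ω s rfl) : ℝ) else 0) := by
    intro p
    rw [nGround_eq p.1 ω]
    push_cast
    rw [Finset.mul_sum, Finset.sum_filter]
    refine Finset.sum_congr rfl (fun s _ => ?_)
    by_cases h : s.card = p.1.arity
    · simp [h]
    · simp only [beq_iff_eq]
      rw [if_neg h, if_neg (fun h' => h h'.symm)]
  calc (Φ.formulas.map fun p => p.2 * (nGround p.1 ω : ℝ)).sum
      = (Φ.formulas.map fun p => ∑ s : Finset (Fin N),
          (if p.1.arity == s.card then p.2 * (nGround p.1 (downset ω s rfl) : ℝ)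
            else 0)).sum := by
        congr 1; exact List.map_congr_left (fun p _ => hterm p)
    _ = ∑ s : Finset (Fin N), (Φ.formulas.map fun p =>
          (if p.1.arity == s.card then p.2 * (nGround p.1 (downset ω s rfl) : ℝ)
            else 0)).sum := list_sum_swap _ _ _
    _ = _ := by
        refine Finset.sum_congr rfl (fun s _ => ?_)
        rw [list_sum_filter]
lemma kweight_downset_irrel (Φ : MLN V) {N : ℕ} (ω : Interp V (Fin N))
    (s : Finset (Fin N)) {k : ℕ} (h : s.card = k) :
    kweight Φ s.card (downset ω s rfl) = kweight Φ k (downset ω s h) := by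
  subst h; rfl

lemma downset_map {N n : ℕ} (j : Fin n ↪o Fin N) (ω : Interp V (Fin N))
    (s : Finset (Fin n)) :
    downset ω (s.map j.toEmbedding) (Finset.card_map _) = downset (restrict j ω) s rfl := by
  unfold downset
  have key : ∀ i : Fin s.card,
      ((s.map j.toEmbedding).orderEmbOfFin (Finset.card_map _) i : Fin N)
        = j (s.orderEmbOfFin rfl i) := by
    have := Finset.orderEmbOfFin_unique (f := fun i => j (s.orderEmbOfFin rfl i))
      (s := s.map j.toEmbedding) (Finset.card_map _)
      (fun i => Finset.mem_map_of_mem _ (s.orderEmbOfFin_mem rfl i))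
      (j.strictMono.comp (s.orderEmbOfFin rfl).strictMono)
    intro i
    exact (congrFun this i).symm
  have : restrict (fun i => (s.orderEmbOfFin rfl i : Fin n)) (restrict j ω)
      = restrict (fun i => j (s.orderEmbOfFin rfl i)) ω := rfl
  simp only [Finset.coe_orderIsoOfFin_apply]
  rw [this]
  exact restrict_congr key ω

lemma prod_block (Φ : MLN V) {N n : ℕ} (j : Fin n ↪o Fin N) (ω : Interp V (Fin N)) :
    ∏ s ∈ Finset.univ.filter
        (fun s : Finset (Fin N) => s ⊆ Finset.univ.map j.toEmbedding),
      kweight Φ s.card (downset ω s rfl)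
    = weight Φ (restrict j ω) := by
  classical
  rw [weight_eq_prod]
  refine (Finset.prod_bij (fun t _ => t.map j.toEmbedding) ?_ ?_ ?_ ?_).symm
  · intro t _
    simp only [Finset.mem_filter, Finset.mem_univ, true_and]
    exact Finset.map_subset_map.2 (Finset.subset_univ t)
  · intro a _ b _ h
    exact Finset.map_injective _ h
  · intro s hs
    simp only [Finset.mem_filter, Finset.mem_univ, true_and] at hs
    obtain ⟨t, _, rfl⟩ := Finset.subset_map_iff.1 hs
    exact ⟨t, Finset.mem_univ t, rfl⟩
  · intro t _
    rw [kweight_downset_irrel Φ ω (t.map j.toEmbedding) (Finset.card_map _),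
      downset_map]
lemma kweight_eq_one (Φ : MLN V) {k : ℕ} (h : ∀ p ∈ Φ.formulas, p.1.arity ≠ k)
    (ν : Interp V (Fin k)) : kweight Φ k ν = 1 := by
  unfold kweight
  have : Φ.formulas.filter (fun p => p.1.arity == k) = [] := by
    rw [List.filter_eq_nil_iff]
    intro p hp
    simpa using h p hp
  rw [this]
  simp

lemma wmax_eq_one (Φ : MLN V) {k : ℕ} (h : ∀ p ∈ Φ.formulas, p.1.arity ≠ k) :
    wmax Φ k = 1 := by
  unfold wmax
  rw [show (fun ν : Interp V (Fin k) => kweight Φ k ν) = fun _ => 1 from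
    funext (kweight_eq_one Φ h)]
  exact ciSup_const

lemma wmin_eq_one (Φ : MLN V) {k : ℕ} (h : ∀ p ∈ Φ.formulas, p.1.arity ≠ k) :
    wmin Φ k = 1 := by
  unfold wmin
  rw [show (fun ν : Interp V (Fin k) => kweight Φ k ν) = fun _ => 1 from
    funext (kweight_eq_one Φ h)]
  exact ciInf_const

lemma crossing_count {α : Type*} [Fintype α] [DecidableEq α] (L R : Finset α)
    (hdisj : Disjoint L R) {k : ℕ} (hk : 1 ≤ k) :
    (Finset.univ.filter (fun s : Finset α => s.card = k ∧ ¬ s ⊆ L ∧ ¬ s ⊆ R)).card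
      = (Fintype.card α).choose k - L.card.choose k - R.card.choose k := by
  classical
  set T := Finset.univ.filter (fun s : Finset α => s.card = k) with hTdef
  set TL := T.filter (fun s => s ⊆ L) with hTLdef
  set TR := T.filter (fun s => s ⊆ R) with hTRdef
  have hT : T.card = (Fintype.card α).choose k := by
    have : T = Finset.univ.powersetCard k := by
      ext s; simp [hTdef, Finset.mem_powersetCard]
    rw [this, Finset.card_powersetCard, Finset.card_univ]
  have hTL : TL.card = L.card.choose k := by
    have : TL = L.powersetCard k := by
      ext s; simp [hTLdef, hTdef, Finset.mem_powersetCard, and_comm]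
    rw [this, Finset.card_powersetCard]
  have hTR : TR.card = R.card.choose k := by
    have : TR = R.powersetCard k := by
      ext s; simp [hTRdef, hTdef, Finset.mem_powersetCard, and_comm]
    rw [this, Finset.card_powersetCard]
  have hset : Finset.univ.filter (fun s : Finset α => s.card = k ∧ ¬ s ⊆ L ∧ ¬ s ⊆ R)
      = T \ (TL ∪ TR) := by
    ext s
    simp only [hTdef, hTLdef, hTRdef, Finset.mem_filter, Finset.mem_sdiff,
      Finset.mem_union, Finset.mem_univ, true_and]
    tauto
  have hdTLR : Disjoint TL TR := by
    rw [Finset.disjoint_left]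
    intro s hsL hsR
    have h1 := Finset.mem_filter.1 hsL
    have h2 := Finset.mem_filter.1 hsR
    have hcard : s.card = k := (Finset.mem_filter.1 h1.1).2
    have hsub : s ⊆ L ∩ R := Finset.subset_inter h1.2 h2.2
    rw [Finset.disjoint_iff_inter_eq_empty.1 hdisj, Finset.subset_empty] at hsub
    subst hsub
    simp at hcard
    omega
  have hsub2 : TL ∪ TR ⊆ T :=
    Finset.union_subset (Finset.filter_subset _ _) (Finset.filter_subset _ _)
  rw [hset, Finset.card_sdiff_of_subset hsub2, Finset.card_union_of_disjoint hdTLR,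
    hT, hTL, hTR, Nat.sub_sub]
lemma prod_crossing_eq {n m d : ℕ} (w : ℕ → ℝ) (hw : ∀ k, d < k → w k = 1)
    (L R : Finset (Fin (n + m))) (hdisj : Disjoint L R)
    (hL : L.card = n) (hR : R.card = m) :
    ∏ s ∈ Finset.univ.filter (fun s : Finset (Fin (n + m)) => ¬ s ⊆ L ∧ ¬ s ⊆ R),
        w s.card
      = ∏ k ∈ Finset.Icc 1 d, w k ^ exponent n m k := by
  classical
  set Cr := Finset.univ.filter
    (fun s : Finset (Fin (n + m)) => ¬ s ⊆ L ∧ ¬ s ⊆ R) with hCr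
  have hmaps : ∀ s ∈ Cr, s.card ∈ Finset.range (n + m + 1) := by
    intro s _
    rw [Finset.mem_range]
    have h2 : s.card ≤ n + m := by simpa using s.card_le_univ
    omega
  have h1 : ∏ s ∈ Cr, w s.card
      = ∏ k ∈ Finset.range (n + m + 1), w k ^ (Cr.filter (fun s => s.card = k)).card := by
    rw [← Finset.prod_fiberwise_of_maps_to' hmaps (fun k => w k)]
    exact Finset.prod_congr rfl (fun k _ => Finset.prod_const _)
  have hcount : ∀ k, 1 ≤ k → (Cr.filter (fun s => s.card = k)).card = exponent n m k := by
    intro k hk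
    have : Cr.filter (fun s => s.card = k)
        = Finset.univ.filter (fun s : Finset (Fin (n + m)) =>
            s.card = k ∧ ¬ s ⊆ L ∧ ¬ s ⊆ R) := by
      rw [hCr, Finset.filter_filter]
      exact Finset.filter_congr (fun s _ => by tauto)
    rw [this, crossing_count L R hdisj hk, Fintype.card_fin, hL, hR, exponent]
  have hzero : (Cr.filter (fun s => s.card = 0)).card = 0 := by
    rw [Finset.card_eq_zero, Finset.filter_eq_empty_iff]
    intro s hs
    intro hc
    rw [Finset.card_eq_zero] at hc
    subst hc
    exact (Finset.mem_filter.1 hs).2.1 (Finset.empty_subset _)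
  set K := Finset.range (n + m + 1) ∪ Finset.Icc 1 d with hK
  have e1 : ∏ k ∈ Finset.range (n + m + 1), w k ^ (Cr.filter (fun s => s.card = k)).card
      = ∏ k ∈ K, w k ^ (Cr.filter (fun s => s.card = k)).card := by
    refine Finset.prod_subset Finset.subset_union_left (fun k _ hk => ?_)
    rw [Finset.mem_range, not_lt] at hk
    have : (Cr.filter (fun s => s.card = k)).card = 0 := by
      rw [Finset.card_eq_zero, Finset.filter_eq_empty_iff]
      intro s hs hc
      have := hmaps s hs
      rw [Finset.mem_range] at this
      omega
    rw [this, pow_zero]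
  have e2 : ∏ k ∈ Finset.Icc 1 d, w k ^ exponent n m k
      = ∏ k ∈ K, w k ^ exponent n m k := by
    refine Finset.prod_subset Finset.subset_union_right (fun k _ hk => ?_)
    rw [Finset.mem_Icc] at hk
    rcases Nat.lt_or_ge d k with h | h
    · rw [hw k h, one_pow]
    · have hk0 : k = 0 := by omega
      subst hk0
      have : exponent n m 0 = 0 := by simp [exponent]
      rw [this, pow_zero]
  rw [h1, e1, e2]
  refine Finset.prod_congr rfl (fun k _ => ?_)
  rcases Nat.eq_zero_or_pos k with rfl | hk
  · rw [hzero, pow_zero, show exponent n m 0 = 0 by simp [exponent], pow_zero]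
  · rcases Nat.lt_or_ge d k with h | h
    · rw [hw k h, one_pow, one_pow]
    · rw [hcount k hk]
def Lset (n m : ℕ) : Finset (Fin (n + m)) :=
  Finset.univ.map (Fin.castAddOrderEmb m).toEmbedding

def Rset (n m : ℕ) : Finset (Fin (n + m)) :=
  Finset.univ.map (Fin.natAddOrderEmb n).toEmbedding

section Split
variable (Φ : MLN V) (n m : ℕ)

lemma LR_disjoint : Disjoint (Lset n m) (Rset n m) := by
  unfold Lset Rset
  rw [Finset.disjoint_left]
  intro x hxL hxR
  simp only [Finset.mem_map, Finset.mem_univ, true_and] at hxL hxR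
  obtain ⟨i, rfl⟩ := hxL
  obtain ⟨j, hj⟩ := hxR
  have h1 : ((Fin.castAddOrderEmb (n := n) m).toEmbedding i : Fin (n+m)).val < n := by
    exact i.isLt
  rw [← hj] at h1
  have h2 : ((Fin.natAddOrderEmb (m := m) n).toEmbedding j : Fin (n+m)).val = n + j := by
    rfl
  omega

lemma weight_split (hd1 : ∀ p ∈ Φ.formulas, 1 ≤ p.1.arity) (ω : Interp V (Fin (n + m))) :
    weight Φ ω = weight Φ (restrict (Fin.castAdd m) ω) * weight Φ (restrict (Fin.natAdd n) ω)
      * ∏ s ∈ Finset.univ.filter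
          (fun s : Finset (Fin (n + m)) => ¬ s ⊆ (Lset n m) ∧ ¬ s ⊆ (Rset n m)),
          kweight Φ s.card (downset ω s rfl) := by
  classical
  set g := fun s : Finset (Fin (n + m)) => kweight Φ s.card (downset ω s rfl) with hg
  have hLrw : restrict (⇑(Fin.castAddOrderEmb (n := n) m)) ω = restrict (Fin.castAdd m) ω :=
    restrict_congr (fun i => by simp) ω
  have hRrw : restrict (⇑(Fin.natAddOrderEmb (m := m) n)) ω = restrict (Fin.natAdd n) ω :=
    restrict_congr (fun i => by simp) ω
  have h0 : weight Φ ω = ∏ s : Finset (Fin (n + m)), g s := weight_eq_prod Φ ω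
  have hsplit1 : ∏ s : Finset (Fin (n + m)), g s
      = (∏ s ∈ Finset.univ.filter (fun s => s ⊆ (Lset n m)), g s)
        * ∏ s ∈ Finset.univ.filter (fun s => ¬ s ⊆ (Lset n m)), g s :=
    (Finset.prod_filter_mul_prod_filter_not _ _ _).symm
  have hsplit2 : ∏ s ∈ Finset.univ.filter (fun s => ¬ s ⊆ (Lset n m)), g s
      = (∏ s ∈ (Finset.univ.filter (fun s => ¬ s ⊆ (Lset n m))).filter (fun s => s ⊆ (Rset n m)), g s)
        * ∏ s ∈ (Finset.univ.filter (fun s => ¬ s ⊆ (Lset n m))).filter (fun s => ¬ s ⊆ (Rset n m)), g s :=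
    (Finset.prod_filter_mul_prod_filter_not _ _ _).symm
  -- the middle factor equals the product over all subsets of (Rset n m)
  have hmid : ∏ s ∈ (Finset.univ.filter (fun s => ¬ s ⊆ (Lset n m))).filter (fun s => s ⊆ (Rset n m)), g s
      = ∏ s ∈ Finset.univ.filter (fun s => s ⊆ (Rset n m)), g s := by
    have hsplit3 : ∏ s ∈ Finset.univ.filter (fun s => s ⊆ (Rset n m)), g s
        = (∏ s ∈ (Finset.univ.filter (fun s => s ⊆ (Rset n m))).filter (fun s => s ⊆ (Lset n m)), g s)
          * ∏ s ∈ (Finset.univ.filter (fun s => s ⊆ (Rset n m))).filter (fun s => ¬ s ⊆ (Lset n m)), g s :=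
      (Finset.prod_filter_mul_prod_filter_not _ _ _).symm
    have hempty : (Finset.univ.filter (fun s => s ⊆ (Rset n m))).filter (fun s => s ⊆ (Lset n m))
        = {∅} := by
      ext s
      simp only [Finset.mem_filter, Finset.mem_univ, true_and, Finset.mem_singleton]
      constructor
      · rintro ⟨h1, h2⟩
        have : s ⊆ (Lset n m) ∩ (Rset n m) := Finset.subset_inter h2 h1
        rwa [Finset.disjoint_iff_inter_eq_empty.1 (LR_disjoint n m),
          Finset.subset_empty] at this
      · rintro rfl
        exact ⟨Finset.empty_subset _, Finset.empty_subset _⟩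
    have hgempty : g ∅ = 1 := by
      rw [hg]
      exact kweight_eq_one Φ (fun p hp => by
        have := hd1 p hp
        simp only [Finset.card_empty]
        omega) _
    have hcomm : (Finset.univ.filter (fun s => s ⊆ (Rset n m))).filter (fun s => ¬ s ⊆ (Lset n m))
        = (Finset.univ.filter (fun s => ¬ s ⊆ (Lset n m))).filter (fun s => s ⊆ (Rset n m)) := by
      rw [Finset.filter_filter, Finset.filter_filter]
      exact Finset.filter_congr (fun s _ => by tauto)
    rw [hsplit3, hempty, hcomm, Finset.prod_singleton, hgempty, one_mul]
  have hcross : (Finset.univ.filter (fun s => ¬ s ⊆ (Lset n m))).filter (fun s => ¬ s ⊆ (Rset n m))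
      = Finset.univ.filter
          (fun s : Finset (Fin (n + m)) => ¬ s ⊆ (Lset n m) ∧ ¬ s ⊆ (Rset n m)) := by
    rw [Finset.filter_filter]
  have hLprod : ∏ s ∈ Finset.univ.filter (fun s => s ⊆ (Lset n m)), g s
      = weight Φ (restrict (Fin.castAdd m) ω) := by
    show ∏ s ∈ Finset.univ.filter
        (fun s => s ⊆ Finset.univ.map (Fin.castAddOrderEmb (n := n) m).toEmbedding),
        kweight Φ s.card (downset ω s rfl) = _
    rw [prod_block Φ (Fin.castAddOrderEmb m) ω, hLrw]
  have hRprod : ∏ s ∈ Finset.univ.filter (fun s => s ⊆ (Rset n m)), g s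
      = weight Φ (restrict (Fin.natAdd n) ω) := by
    show ∏ s ∈ Finset.univ.filter
        (fun s => s ⊆ Finset.univ.map (Fin.natAddOrderEmb (m := m) n).toEmbedding),
        kweight Φ s.card (downset ω s rfl) = _
    rw [prod_block Φ (Fin.natAddOrderEmb n) ω, hRrw]
  rw [h0, hsplit1, hsplit2, hmid, hcross, hLprod, hRprod, mul_assoc]

end Split
lemma Lset_card (n m : ℕ) : (Lset n m).card = n := by
  simp [Lset]

lemma Rset_card (n m : ℕ) : (Rset n m).card = m := by
  simp [Rset]

lemma weight_bounds (Φ : MLN V) (d n m : ℕ)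
    (hd : ∀ p ∈ Φ.formulas, 1 ≤ p.1.arity ∧ p.1.arity ≤ d)
    (ω : Interp V (Fin (n + m))) :
    Mmin Φ d n m * (weight Φ (restrict (Fin.castAdd m) ω)
        * weight Φ (restrict (Fin.natAdd n) ω)) ≤ weight Φ ω ∧
    weight Φ ω ≤ Mmax Φ d n m * (weight Φ (restrict (Fin.castAdd m) ω)
        * weight Φ (restrict (Fin.natAdd n) ω)) := by
  classical
  have hsplit := weight_split Φ n m (fun p hp => (hd p hp).1) ω
  set Cr := Finset.univ.filter
    (fun s : Finset (Fin (n + m)) => ¬ s ⊆ Lset n m ∧ ¬ s ⊆ Rset n m) with hCr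
  set P := ∏ s ∈ Cr, kweight Φ s.card (downset ω s rfl) with hP
  have hwgt : ∀ k, d < k → ∀ p ∈ Φ.formulas, p.1.arity ≠ k := by
    intro k hk p hp
    have := (hd p hp).2
    omega
  have hub : P ≤ Mmax Φ d n m := by
    have h1 : P ≤ ∏ s ∈ Cr, wmax Φ s.card := by
      refine Finset.prod_le_prod (fun s _ => (kweight_pos Φ _ _).le)
        (fun s _ => kweight_le_wmax Φ _ _)
    have h2 : ∏ s ∈ Cr, wmax Φ s.card = Mmax Φ d n m := by
      rw [hCr]
      exact prod_crossing_eq (wmax Φ) (fun k hk => wmax_eq_one Φ (hwgt k hk))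
        (Lset n m) (Rset n m) (LR_disjoint n m) (Lset_card n m) (Rset_card n m)
    exact h1.trans h2.le
  have hlb : Mmin Φ d n m ≤ P := by
    have h1 : ∏ s ∈ Cr, wmin Φ s.card ≤ P := by
      refine Finset.prod_le_prod (fun s _ => (wmin_pos Φ _).le)
        (fun s _ => wmin_le_kweight Φ _ _)
    have h2 : ∏ s ∈ Cr, wmin Φ s.card = Mmin Φ d n m := by
      rw [hCr]
      exact prod_crossing_eq (wmin Φ) (fun k hk => wmin_eq_one Φ (hwgt k hk))
        (Lset n m) (Rset n m) (LR_disjoint n m) (Lset_card n m) (Rset_card n m)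
    exact h2.ge.trans h1
  have hpos : 0 < weight Φ (restrict (Fin.castAdd m) ω) * weight Φ (restrict (Fin.natAdd n) ω) :=
    mul_pos (weight_pos Φ _) (weight_pos Φ _)
  constructor
  · rw [hsplit]
    calc Mmin Φ d n m * (weight Φ (restrict (Fin.castAdd m) ω)
          * weight Φ (restrict (Fin.natAdd n) ω))
        ≤ P * (weight Φ (restrict (Fin.castAdd m) ω)
          * weight Φ (restrict (Fin.natAdd n) ω)) :=
          mul_le_mul_of_nonneg_right hlb hpos.le
      _ = weight Φ (restrict (Fin.castAdd m) ω)
          * weight Φ (restrict (Fin.natAdd n) ω) * P := mul_comm _ _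
  · rw [hsplit]
    calc weight Φ (restrict (Fin.castAdd m) ω)
          * weight Φ (restrict (Fin.natAdd n) ω) * P
        = P * (weight Φ (restrict (Fin.castAdd m) ω)
          * weight Φ (restrict (Fin.natAdd n) ω)) := mul_comm _ _
      _ ≤ Mmax Φ d n m * (weight Φ (restrict (Fin.castAdd m) ω)
          * weight Φ (restrict (Fin.natAdd n) ω)) :=
          mul_le_mul_of_nonneg_right hub hpos.le
theorem partition_function_bounds' {V : Vocab} (Φ : MLN V) (d n m : ℕ)
    (hd : ∀ p ∈ Φ.formulas, 1 ≤ p.1.arity ∧ p.1.arity ≤ d)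
    (C : ℕ)
    (hC : ∀ (ω₁ : Interp V (Fin n)) (ω₂ : Interp V (Fin m)),
      Fintype.card {ω : Interp V (Fin (n + m)) //
        restrict (Fin.castAdd m) ω = ω₁ ∧ restrict (Fin.natAdd n) ω = ω₂} = C) :
    Mmin Φ d n m * C * Zpart Φ n * Zpart Φ m ≤ Zpart Φ (n + m) ∧
    Zpart Φ (n + m) ≤ Mmax Φ d n m * C * Zpart Φ n * Zpart Φ m := by
  classical
  set g := fun ω : Interp V (Fin (n + m)) =>
    (restrict (Fin.castAdd m) ω, restrict (Fin.natAdd n) ω) with hgdef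
  have hkey : Zpart Φ (n + m)
      = ∑ p : Interp V (Fin n) × Interp V (Fin m),
          ∑ ω ∈ Finset.univ.filter (fun ω => g ω = p), weight Φ ω := by
    rw [Zpart]
    exact (Finset.sum_fiberwise_of_maps_to (fun ω _ => Finset.mem_univ (g ω)) _).symm
  have hcard : ∀ p : Interp V (Fin n) × Interp V (Fin m),
      (Finset.univ.filter (fun ω => g ω = p)).card = C := by
    intro p
    rw [← Fintype.card_subtype]
    rw [← hC p.1 p.2]
    exact Fintype.card_congr (Equiv.subtypeEquivRight (fun ω => by
      simp [hgdef, Prod.ext_iff]))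
  have hsum_ub : ∀ p : Interp V (Fin n) × Interp V (Fin m),
      ∑ ω ∈ Finset.univ.filter (fun ω => g ω = p), weight Φ ω
        ≤ (C : ℝ) * (Mmax Φ d n m * (weight Φ p.1 * weight Φ p.2)) := by
    intro p
    calc ∑ ω ∈ Finset.univ.filter (fun ω => g ω = p), weight Φ ω
        ≤ ∑ _ω ∈ Finset.univ.filter (fun ω => g ω = p),
            Mmax Φ d n m * (weight Φ p.1 * weight Φ p.2) := by
          refine Finset.sum_le_sum (fun ω hω => ?_)
          have hmem := (Finset.mem_filter.1 hω).2
          have h1 : restrict (Fin.castAdd m) ω = p.1 := congrArg Prod.fst hmem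
          have h2 : restrict (Fin.natAdd n) ω = p.2 := congrArg Prod.snd hmem
          have := (weight_bounds Φ d n m hd ω).2
          rwa [h1, h2] at this
      _ = (C : ℝ) * (Mmax Φ d n m * (weight Φ p.1 * weight Φ p.2)) := by
          rw [Finset.sum_const, hcard p, nsmul_eq_mul]
  have hsum_lb : ∀ p : Interp V (Fin n) × Interp V (Fin m),
      (C : ℝ) * (Mmin Φ d n m * (weight Φ p.1 * weight Φ p.2))
        ≤ ∑ ω ∈ Finset.univ.filter (fun ω => g ω = p), weight Φ ω := by
    intro p
    calc (C : ℝ) * (Mmin Φ d n m * (weight Φ p.1 * weight Φ p.2))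
        = ∑ _ω ∈ Finset.univ.filter (fun ω => g ω = p),
            Mmin Φ d n m * (weight Φ p.1 * weight Φ p.2) := by
          rw [Finset.sum_const, hcard p, nsmul_eq_mul]
      _ ≤ ∑ ω ∈ Finset.univ.filter (fun ω => g ω = p), weight Φ ω := by
          refine Finset.sum_le_sum (fun ω hω => ?_)
          have hmem := (Finset.mem_filter.1 hω).2
          have h1 : restrict (Fin.castAdd m) ω = p.1 := congrArg Prod.fst hmem
          have h2 : restrict (Fin.natAdd n) ω = p.2 := congrArg Prod.snd hmem
          have := (weight_bounds Φ d n m hd ω).1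
          rwa [h1, h2] at this
  have htotal_ub : ∑ p : Interp V (Fin n) × Interp V (Fin m),
      (C : ℝ) * (Mmax Φ d n m * (weight Φ p.1 * weight Φ p.2))
        = Mmax Φ d n m * C * Zpart Φ n * Zpart Φ m := by
    rw [Fintype.sum_prod_type, Zpart, Zpart]
    simp only [Finset.mul_sum, Finset.sum_mul]
    rw [Finset.sum_comm]
    exact Finset.sum_congr rfl fun ω₂ _ => Finset.sum_congr rfl fun ω₁ _ => by ring
  have htotal_lb : ∑ p : Interp V (Fin n) × Interp V (Fin m),
      (C : ℝ) * (Mmin Φ d n m * (weight Φ p.1 * weight Φ p.2))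
        = Mmin Φ d n m * C * Zpart Φ n * Zpart Φ m := by
    rw [Fintype.sum_prod_type, Zpart, Zpart]
    simp only [Finset.mul_sum, Finset.sum_mul]
    rw [Finset.sum_comm]
    exact Finset.sum_congr rfl fun ω₂ _ => Finset.sum_congr rfl fun ω₁ _ => by ring
  constructor
  · rw [hkey, ← htotal_lb]
    exact Finset.sum_le_sum (fun p _ => hsum_lb p)
  · rw [hkey, ← htotal_ub]
    exact Finset.sum_le_sum (fun p _ => hsum_ub p)

end AuxProof

/-- partition function bounds
`M_min · C_{n,m} · Z(n) · Z(m) ≤ Z(n+m) ≤ M_max · C_{n,m} · Z(n) · Z(m)`,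
where `C` is the (constant) number of ways to extend a pair of interpretations on
`[n]` and `[n+1..n+m]` to a full interpretation on `[n+m]`. -/
theorem partition_function_bounds {V : Vocab} (Φ : MLN V) (d n m : ℕ)
    (hd : ∀ p ∈ Φ.formulas, 1 ≤ p.1.arity ∧ p.1.arity ≤ d)
    (C : ℕ)
    (hC : ∀ (ω₁ : Interp V (Fin n)) (ω₂ : Interp V (Fin m)),
      Fintype.card {ω : Interp V (Fin (n + m)) //
        restrict (Fin.castAdd m) ω = ω₁ ∧ restrict (Fin.natAdd n) ω = ω₂} = C) :
    Mmin Φ d n m * C * Zpart Φ n * Zpart Φ m ≤ Zpart Φ (n + m) ∧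
    Zpart Φ (n + m) ≤ Mmax Φ d n m * C * Zpart Φ n * Zpart Φ m := by
  exact partition_function_bounds' Φ d n m hd C hC
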